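/- For 0 < q < 1 and n ≥ 1, the polynomial P_n(z) = 1 + ∑_{k=1}^n (n!/(n-k)!) · q^{k(k+1)/2}/((q-1)⋯(q^k-1)) · z^k has only real positive zeroes. -/

import Mathlib

open Polynomial Filter

section Epart


noncomputable def Ee (q : ℝ) : ℕ → ℕ → ℝ
  | _, 0 => 1
  | 0, _+1 => 0
  | m+1, k+1 => Ee q m (k+1) + q^(m+1) * Ee q m k

variable {q : ℝ}

lemma Ee_zero (m : ℕ) : Ee q m 0 = 1 := by cases m <;> rfl

lemma Ee_nonneg (hq0 : 0 < q) : ∀ m k, 0 ≤ Ee q m k := by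
  intro m
  induction m with
  | zero =>
    intro k
    match k with
    | 0 => exact zero_le_one
    | k+1 => exact le_refl 0
  | succ m ih =>
    intro k
    match k with
    | 0 => exact zero_le_one
    | k+1 => exact add_nonneg (ih _) (mul_nonneg (by positivity) (ih _))

lemma Ee_telescope (m k : ℕ) :
    Ee q m (k+1) = ∑ j ∈ Finset.range m, q^(j+1) * Ee q j k := by
  induction m with
  | zero => simp [Ee]
  | succ m ih => rw [Finset.sum_range_succ, ← ih]; rfl

lemma Ee_le (hq0 : 0 < q) (hq1 : q < 1) : ∀ k m, Ee q m k ≤ (q/(1-q))^k := by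
  intro k
  induction k with
  | zero => intro m; simp [Ee_zero]
  | succ k ih =>
    intro m
    have h1q : (0:ℝ) < 1 - q := by linarith
    rw [Ee_telescope, pow_succ']
    calc ∑ j ∈ Finset.range m, q^(j+1) * Ee q j k
        ≤ ∑ j ∈ Finset.range m, q^(j+1) * (q/(1-q))^k := by
          apply Finset.sum_le_sum
          intro j _
          exact mul_le_mul_of_nonneg_left (ih j) (by positivity)
      _ = (∑ j ∈ Finset.range m, q^(j+1)) * (q/(1-q))^k := by rw [Finset.sum_mul]
      _ ≤ (q/(1-q)) * (q/(1-q))^k := by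
          apply mul_le_mul_of_nonneg_right _ (by positivity)
          have hgeom : ∑ j ∈ Finset.range m, q^(j+1) = q * ∑ j ∈ Finset.range m, q^j := by
            rw [Finset.mul_sum]; exact Finset.sum_congr rfl (fun j _ => by ring)
          rw [hgeom, div_eq_mul_inv]
          apply mul_le_mul_of_nonneg_left _ hq0.le
          rw [geom_sum_eq (ne_of_lt hq1), div_le_iff_of_neg (by linarith : q - 1 < 0)]
          have h2 : (1-q)⁻¹ * (q-1) = -1 := by field_simp; ring
          have h3 : 0 < q ^ m := pow_pos hq0 m
          linarith
      _ = _ := rfl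

lemma Ee_mono (hq0 : 0 < q) (k : ℕ) : Monotone (fun m => Ee q m k) := by
  apply monotone_nat_of_le_succ
  intro m
  match k with
  | 0 => simp [Ee_zero]
  | k+1 =>
    show Ee q m (k+1) ≤ Ee q m (k+1) + q^(m+1) * Ee q m k
    nlinarith [Ee_nonneg hq0 m k, pow_pos hq0 (m+1)]

lemma Ee_succ_succ (m k : ℕ) : Ee q (m+1) (k+1) = Ee q m (k+1) + q^(m+1) * Ee q m k := rfl

lemma Ee_step_one (m : ℕ) : Ee q (m+1) 1 = Ee q m 1 + q^(m+1) := by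
  rw [Ee_succ_succ, Ee_zero, mul_one]

lemma Ee_one_succ (hq0 : 0 < q) : ∀ m, Ee q (m+1) 1 = q * (Ee q m 1 + 1) := by
  intro m
  induction m with
  | zero => rw [Ee_step_one]; show (0:ℝ) + q^1 = q * (0 + 1); ring
  | succ m ih =>
    calc Ee q (m+2) 1 = Ee q (m+1) 1 + q^(m+2) := Ee_step_one _
      _ = (q * (Ee q m 1 + 1)) + q^(m+2) := by rw [ih]
      _ = q * ((Ee q m 1 + q^(m+1)) + 1) := by ring
      _ = q * (Ee q (m+1) 1 + 1) := by rw [Ee_step_one]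

lemma Ee_shift (hq0 : 0 < q) : ∀ m k, Ee q (m+1) (k+1) = q^(k+1) * (Ee q m (k+1) + Ee q m k) := by
  intro m
  induction m with
  | zero =>
    intro k
    match k with
    | 0 => show Ee q 0 1 + q^1 * Ee q 0 0 = _; simp [Ee]
    | k+1 =>
      show Ee q 0 (k+2) + q^1 * Ee q 0 (k+1) = _
      show (0:ℝ) + q^1 * 0 = q^(k+2) * ((0:ℝ) + 0)
      ring
  | succ m ih =>
    intro k
    match k with
    | 0 => rw [Ee_one_succ hq0 (m+1), Ee_zero, pow_one]
    | k+1 =>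
      calc Ee q (m+2) (k+2) = Ee q (m+1) (k+2) + q^(m+2) * Ee q (m+1) (k+1) := Ee_succ_succ _ _
        _ = q^(k+2) * (Ee q m (k+2) + Ee q m (k+1)) + q^(m+2) * (q^(k+1) * (Ee q m (k+1) + Ee q m k)) := by
            rw [ih (k+1), ih k]
        _ = q^(k+2) * ((Ee q m (k+2) + q^(m+1) * Ee q m (k+1)) + (Ee q m (k+1) + q^(m+1) * Ee q m k)) := by
            ring
        _ = q^(k+2) * (Ee q (m+1) (k+2) + Ee q (m+1) (k+1)) := by
            rw [Ee_succ_succ m (k+1), Ee_succ_succ m k]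

lemma Ee_zero_succ (k : ℕ) : Ee q 0 (k+1) = 0 := rfl
noncomputable def Le (q : ℝ) (k : ℕ) : ℝ := ⨆ m, Ee q m k

lemma Ee_bdd (hq0 : 0 < q) (hq1 : q < 1) (k : ℕ) : BddAbove (Set.range (fun m => Ee q m k)) :=
  ⟨(q/(1-q))^k, by rintro x ⟨m, rfl⟩; exact Ee_le hq0 hq1 k m⟩

lemma Ee_tendsto (hq0 : 0 < q) (hq1 : q < 1) (k : ℕ) :
    Tendsto (fun m => Ee q m k) atTop (nhds (Le q k)) :=
  tendsto_atTop_ciSup (Ee_mono hq0 k) (Ee_bdd hq0 hq1 k)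

lemma Le_zero : Le q 0 = 1 := by
  have : (fun m => Ee q m 0) = fun _ => (1:ℝ) := funext Ee_zero
  simp [Le, this]

lemma Le_nonneg (hq0 : 0 < q) (hq1 : q < 1) (k : ℕ) : 0 ≤ Le q k :=
  le_ciSup_of_le (Ee_bdd hq0 hq1 k) 0 (Ee_nonneg hq0 0 k)

lemma Le_rec (hq0 : 0 < q) (hq1 : q < 1) (k : ℕ) :
    Le q (k+1) = q^(k+1) * (Le q (k+1) + Le q k) := by
  have h1 : Tendsto (fun m => Ee q (m+1) (k+1)) atTop (nhds (Le q (k+1))) :=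
    (Ee_tendsto hq0 hq1 (k+1)).comp (tendsto_add_atTop_nat 1)
  have h2 : Tendsto (fun m => q^(k+1) * (Ee q m (k+1) + Ee q m k)) atTop
      (nhds (q^(k+1) * (Le q (k+1) + Le q k))) :=
    (((Ee_tendsto hq0 hq1 (k+1)).add (Ee_tendsto hq0 hq1 k)).const_mul _)
  have : (fun m => Ee q (m+1) (k+1)) = fun m => q^(k+1) * (Ee q m (k+1) + Ee q m k) :=
    funext (fun m => Ee_shift hq0 m k)
  rw [this] at h1
  exact tendsto_nhds_unique h1 h2

lemma Le_succ (hq0 : 0 < q) (hq1 : q < 1) (k : ℕ) :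
    Le q (k+1) * (1 - q^(k+1)) = q^(k+1) * Le q k := by
  have := Le_rec hq0 hq1 k
  nlinarith [this]

lemma Le_closed (hq0 : 0 < q) (hq1 : q < 1) (k : ℕ) :
    Le q k * (∏ i ∈ Finset.Icc 1 k, (1 - q^i)) = q^(k*(k+1)/2) := by
  induction k with
  | zero => simp [Le_zero]
  | succ k ih =>
    have hprod : ∏ i ∈ Finset.Icc 1 (k+1), (1 - q^i)
        = (∏ i ∈ Finset.Icc 1 k, (1 - q^i)) * (1 - q^(k+1)) := by
      rw [← Finset.prod_Icc_succ_top (by omega)]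
    have hexp : (k+1)*(k+2)/2 = k*(k+1)/2 + (k+1) := by
      have h1 : k*(k+1)/2*2 = k*(k+1) := Nat.div_mul_cancel (Nat.even_mul_succ_self k).two_dvd
      have h2 : (k+1)*(k+2)/2*2 = (k+1)*(k+2) := Nat.div_mul_cancel (Nat.even_mul_succ_self (k+1)).two_dvd
      have h3 : (k+1)*(k+2) = k*(k+1)+2*(k+1) := by ring
      omega
    rw [hprod, hexp]
    calc Le q (k+1) * ((∏ i ∈ Finset.Icc 1 k, (1 - q^i)) * (1 - q^(k+1)))
        = (Le q (k+1) * (1 - q^(k+1))) * ∏ i ∈ Finset.Icc 1 k, (1 - q^i) := by ring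
      _ = (q^(k+1) * Le q k) * ∏ i ∈ Finset.Icc 1 k, (1 - q^i) := by rw [Le_succ hq0 hq1]
      _ = q^(k+1) * (Le q k * ∏ i ∈ Finset.Icc 1 k, (1 - q^i)) := by ring
      _ = q^(k+1) * q^(k*(k+1)/2) := by rw [ih]
      _ = _ := by rw [pow_add]; ring

end Epart

lemma ofFn_get_cast {α : Type*} {n : ℕ} (l : List α) (h : l.length = n) :
    List.ofFn (fun i : Fin n => l.get (Fin.cast h.symm i)) = l := by
  subst h; exact List.ofFn_get l

lemma eval_factored {n : ℕ} (p : Polynomial ℝ) (hdeg : p.natDegree = n)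
    (hcard : p.roots.card = n) (v : Fin n → ℝ)
    (hv : List.ofFn v = p.roots.toList) (x : ℝ) :
    p.eval x = p.coeff n * ∏ i, (x - v i) := by
  have hsplit : p.Splits := by
    rw [splits_iff_card_roots, hdeg, hcard]
  have hfac := hsplit.eq_prod_roots
  have hlc : p.leadingCoeff = p.coeff n := by rw [leadingCoeff, hdeg]
  have hroots : p.roots = (List.ofFn v : Multiset ℝ) := by
    rw [hv, Multiset.coe_toList]
  have h1 : p.eval x = p.leadingCoeff * ((p.roots.map (fun r => x - r)).prod) := by
    conv_lhs => rw [hfac]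
    rw [eval_mul, eval_C, eval_multiset_prod, Multiset.map_map]
    simp [Function.comp]
  rw [h1, hlc, hroots, Multiset.map_coe, Multiset.prod_coe, List.map_ofFn]
  congr 1
  rw [← List.prod_ofFn]
  rfl

lemma lim_roots (n : ℕ) (f : ℕ → Polynomial ℝ) (g : Polynomial ℝ)
    (hdeg : ∀ N, (f N).natDegree = n) (hcard : ∀ N, ((f N).roots).card = n)
    (M : ℝ) (hM : ∀ N r, r ∈ (f N).roots → |r| ≤ M)
    (heval : ∀ x : ℝ, Tendsto (fun N => (f N).eval x) atTop (nhds (g.eval x)))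
    (hlead : Tendsto (fun N => (f N).coeff n) atTop (nhds (g.coeff n))) :
    ∃ s : Multiset ℝ, s.card = n ∧ g = C (g.coeff n) * (s.map fun r => X - C r).prod := by
  have hlen : ∀ N, ((f N).roots.toList).length = n := fun N => by
    rw [Multiset.length_toList, hcard N]
  set v : ℕ → Fin n → ℝ := fun N i => ((f N).roots.toList).get (Fin.cast (hlen N).symm i) with hvdef
  have hofn : ∀ N, List.ofFn (v N) = (f N).roots.toList := fun N => ofFn_get_cast _ (hlen N)
  have hvmem : ∀ N i, v N i ∈ (f N).roots := by
    intro N i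
    have : v N i ∈ (f N).roots.toList := List.get_mem _ _
    rwa [Multiset.mem_toList] at this
  set M' : ℝ := max M 0 with hM'def
  have hK : IsCompact (Metric.closedBall (0 : Fin n → ℝ) M') := isCompact_closedBall _ _
  have hvK : ∀ N, v N ∈ Metric.closedBall (0 : Fin n → ℝ) M' := by
    intro N
    rw [Metric.mem_closedBall, dist_zero_right]
    rw [pi_norm_le_iff_of_nonneg (le_max_right M 0)]
    intro i
    exact le_trans (hM N _ (hvmem N i)) (le_max_left M 0)
  obtain ⟨ρ, _, φ, hφ, hρ⟩ := hK.tendsto_subseq hvK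
  have hφtop : Tendsto φ atTop atTop := hφ.tendsto_atTop
  have keyx : ∀ x : ℝ, g.eval x = g.coeff n * ∏ i, (x - ρ i) := by
    intro x
    have h1 : Tendsto (fun j => (f (φ j)).eval x) atTop (nhds (g.eval x)) :=
      (heval x).comp hφtop
    have h2 : Tendsto (fun j => (f (φ j)).coeff n * ∏ i, (x - v (φ j) i)) atTop
        (nhds (g.coeff n * ∏ i, (x - ρ i))) := by
      apply Tendsto.mul (hlead.comp hφtop)
      apply tendsto_finset_prod
      intro i _
      apply Tendsto.const_sub
      exact ((continuous_apply i).tendsto ρ).comp hρ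
    have heq : (fun j => (f (φ j)).eval x) = fun j => (f (φ j)).coeff n * ∏ i, (x - v (φ j) i) :=
      funext fun j => eval_factored _ (hdeg _) (hcard _) _ (hofn _) x
    rw [heq] at h1
    exact tendsto_nhds_unique h1 h2
  refine ⟨Multiset.map ρ Finset.univ.val, ?_, ?_⟩
  · rw [Multiset.card_map]; simp
  · apply Polynomial.funext
    intro x
    rw [keyx x, eval_mul, eval_C]
    congr 1
    rw [Multiset.map_map, eval_multiset_prod, Multiset.map_map]
    have : (eval x ∘ (fun r => X - C r) ∘ ρ) = fun i => x - ρ i := by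
      funext i; simp
    rw [this, ← Finset.prod_eq_multiset_prod]

lemma root_bound (n : ℕ) (hn : 1 ≤ n) (p : Polynomial ℝ) (hdeg : p.natDegree ≤ n)
    (S : ℝ) (hS : ∀ j, j < n → |p.coeff j| ≤ S)
    (b : ℝ) (hb : 0 < b) (hbc : b ≤ |p.coeff n|)
    (r : ℝ) (hr : p.eval r = 0) : |r| ≤ max 1 (n * S / b) := by
  rcases le_or_gt |r| 1 with h | h
  · exact le_trans h (le_max_left _ _)
  · refine le_trans ?_ (le_max_right _ _)
    have hev : p.eval r = ∑ i ∈ Finset.range (n+1), p.coeff i * r^i :=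
      eval_eq_sum_range' (lt_of_le_of_lt hdeg (lt_add_one n)) r
    rw [Finset.sum_range_succ] at hev
    have key : p.coeff n * r^n = -∑ i ∈ Finset.range n, p.coeff i * r^i := by
      rw [hr] at hev; linarith [hev]
    have hrpos : (0:ℝ) < |r| := by linarith
    have habs : |p.coeff n| * |r|^n ≤ n * S * |r|^(n-1) := by
      calc |p.coeff n| * |r|^n = |p.coeff n * r^n| := by rw [abs_mul, abs_pow]
        _ = |∑ i ∈ Finset.range n, p.coeff i * r^i| := by rw [key, abs_neg]
        _ ≤ ∑ i ∈ Finset.range n, |p.coeff i * r^i| := Finset.abs_sum_le_sum_abs _ _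
        _ ≤ ∑ i ∈ Finset.range n, S * |r|^(n-1) := by
            apply Finset.sum_le_sum
            intro i hi
            rw [abs_mul, abs_pow]
            have hin : i ≤ n - 1 := by have := Finset.mem_range.mp hi; omega
            have hpow : |r|^i ≤ |r|^(n-1) := pow_le_pow_right₀ (le_of_lt h) hin
            have h0S : 0 ≤ S := le_trans (abs_nonneg _) (hS i (Finset.mem_range.mp hi))
            exact mul_le_mul (hS i (Finset.mem_range.mp hi)) hpow (by positivity) h0S
        _ = n * S * |r|^(n-1) := by rw [Finset.sum_const, Finset.card_range]; ring
    have hn1 : n = (n-1) + 1 := by omega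
    have hpow : |r|^n = |r|^(n-1) * |r| := by
      conv_lhs => rw [hn1, pow_succ]
    have hppos : (0:ℝ) < |r|^(n-1) := by positivity
    have h2 : |p.coeff n| * |r| ≤ n * S := by
      rw [hpow] at habs
      nlinarith
    rw [le_div_iff₀ hb]
    nlinarith

lemma laguerre (n : ℕ) (hn : 1 ≤ n) (p : Polynomial ℝ) (hdeg : p.natDegree = n)
    (hcard : p.roots.card = n) (c : ℝ) (hc : 0 < c) :
    (p - C c * p.derivative).natDegree = n ∧
    (p - C c * p.derivative).coeff n = p.coeff n ∧
    (p - C c * p.derivative).roots.card = n := by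
  have hp0 : p ≠ 0 := fun h => by rw [h] at hdeg; simp at hdeg; omega
  have hpc : p.coeff n ≠ 0 := by
    rw [← hdeg]; exact leadingCoeff_ne_zero.mpr hp0
  have hder_deg : p.derivative.natDegree ≤ n - 1 := hdeg ▸ natDegree_derivative_le p
  have hder_coeff : p.derivative.coeff n = 0 := by
    rw [coeff_derivative]
    rw [coeff_eq_zero_of_natDegree_lt (by omega : p.natDegree < n + 1)]
    ring
  set g := p - C c * p.derivative with hgdef
  have hg_coeff : g.coeff n = p.coeff n := by
    simp [hgdef, coeff_sub, coeff_C_mul, hder_coeff]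
  have hXp_deg : (X * p.derivative).natDegree ≤ n := by
    calc (X * p.derivative).natDegree ≤ X.natDegree + p.derivative.natDegree := natDegree_mul_le
      _ ≤ 1 + (n-1) := by rw [natDegree_X]; omega
      _ = n := by omega
  have hg_deg_le : g.natDegree ≤ n := by
    apply le_trans (natDegree_sub_le _ _)
    apply max_le (le_of_eq hdeg)
    calc (C c * p.derivative).natDegree ≤ p.derivative.natDegree := natDegree_C_mul_le _ _
      _ ≤ n := by omega
  have hg_deg : g.natDegree = n :=
    le_antisymm hg_deg_le (le_natDegree_of_ne_zero (hg_coeff ▸ hpc))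
  have hn1 : n = (n-1) + 1 := by omega
  have hXp_coeff : (X * p.derivative).coeff n = p.coeff n * n := by
    have hcast : ((n-1:ℕ):ℝ) + 1 = (n:ℝ) := by
      rw [Nat.cast_sub hn]; ring
    conv_lhs => rw [hn1, coeff_X_mul, coeff_derivative]
    rw [← hn1, hcast]
  -- the approximating family
  set F : ℕ → Polynomial ℝ := fun N => g + C (1/((N:ℝ)+1)) * (X * p.derivative) with hFdef
  have htne : ∀ N : ℕ, ((N:ℝ)+1) ≠ 0 := fun N => by positivity
  have hF_coeff : ∀ N, (F N).coeff n = p.coeff n * (1 + n/((N:ℝ)+1)) := by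
    intro N
    rw [hFdef]
    simp only [coeff_add, coeff_C_mul, hXp_coeff, hg_coeff]
    field_simp
  have hfactor_pos : ∀ N : ℕ, (0:ℝ) < 1 + n/((N:ℝ)+1) := by
    intro N; positivity
  have hF_coeff_ne : ∀ N, (F N).coeff n ≠ 0 := fun N => by
    rw [hF_coeff N]; exact mul_ne_zero hpc (ne_of_gt (hfactor_pos N))
  have hF_deg_le : ∀ N, (F N).natDegree ≤ n := by
    intro N
    apply le_trans (natDegree_add_le _ _)
    apply max_le (le_of_eq hg_deg)
    exact le_trans (natDegree_C_mul_le _ _) hXp_deg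
  have hF_deg : ∀ N, (F N).natDegree = n := fun N =>
    le_antisymm (hF_deg_le N) (le_natDegree_of_ne_zero (hF_coeff_ne N))
  have hF_ne : ∀ N, F N ≠ 0 := fun N h => hF_coeff_ne N (by rw [h]; simp)
  -- root counting for F N
  have hF_card : ∀ N, ((F N).roots).card = n := by
    intro N
    set t : ℝ := (N:ℝ)+1 with htdef
    have ht : t ≠ 0 := htne N
    set A : ℝ := c * t with hAdef
    set u : Polynomial ℝ := (X - C A)^(N+1) * p with hudef
    have hXA : (X - C A) ≠ 0 := X_sub_C_ne_zero A
    have hu0 : u ≠ 0 := mul_ne_zero (pow_ne_zero _ hXA) hp0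
    have hu_roots : (u.roots).card = (N+1) + n := by
      rw [hudef, roots_mul (by rw [← hudef]; exact hu0), roots_pow, roots_X_sub_C]
      simp [hcard]
    have hw : C t * (F N) = C t * p + (X - C A) * p.derivative := by
      rw [hFdef, hgdef]
      have h1 : C t * C (1/t) = 1 := by rw [← C_mul, mul_one_div_cancel ht, C_1]
      have h2 : C A = C c * C t := by rw [hAdef, C_mul, mul_comm]
      calc C t * (p - C c * p.derivative + C (1/t) * (X * p.derivative))
          = C t * p - C t * (C c * p.derivative) + (C t * C (1/t)) * (X * p.derivative) := by ring
        _ = C t * p - (C c * C t) * p.derivative + X * p.derivative := by rw [h1]; ring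
        _ = C t * p + (X - C A) * p.derivative := by rw [h2]; ring
    have hder_u : derivative u = (X - C A)^N * (C t * F N) := by
      have h3 : derivative u = C ((N:ℝ)+1) * (X - C A)^N * p + (X - C A)^(N+1) * p.derivative := by
        rw [hudef, derivative_mul, derivative_pow, derivative_sub, derivative_X, derivative_C]
        push_cast
        ring
      rw [h3, hw, ← htdef]
      ring
    have hder_ne : derivative u ≠ 0 := by
      rw [hder_u]
      exact mul_ne_zero (pow_ne_zero _ hXA) (mul_ne_zero (by simpa using ht) (hF_ne N))
    have hle := card_roots_le_derivative u
    rw [hu_roots, hder_u] at hle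
    have hsplit2 : ((X - C A)^N * (C t * F N)).roots = N • {A} + (F N).roots := by
      rw [roots_mul (by rw [← hder_u]; exact hder_ne), roots_pow, roots_X_sub_C,
        roots_C_mul _ (by simpa using ht)]
    rw [hsplit2] at hle
    simp only [Multiset.card_add, Multiset.card_nsmul, Multiset.card_singleton, mul_one] at hle
    have hub : ((F N).roots).card ≤ n := by
      rw [← hF_deg N]; exact card_roots' _
    omega
  -- limit
  set S : ℝ := ∑ i ∈ Finset.range n, (|g.coeff i| + |(X * p.derivative).coeff i|) with hSdef
  have hS_bound : ∀ N, ∀ j, j < n → |(F N).coeff j| ≤ S := by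
    intro N j hj
    have h1 : |(F N).coeff j| ≤ |g.coeff j| + |(X * p.derivative).coeff j| := by
      rw [hFdef]
      simp only [coeff_add, coeff_C_mul]
      refine le_trans (abs_add_le _ _) ?_
      have h2 : |1/((N:ℝ)+1) * (X * p.derivative).coeff j| ≤ |(X * p.derivative).coeff j| := by
        rw [abs_mul]
        have h3 : |1/((N:ℝ)+1)| ≤ 1 := by
          rw [abs_of_nonneg (by positivity)]
          rw [div_le_one (by positivity)]
          linarith [Nat.cast_nonneg (α := ℝ) N]
        nlinarith [abs_nonneg ((X * p.derivative).coeff j)]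
      linarith
    refine le_trans h1 ?_
    exact Finset.single_le_sum (f := fun i => |g.coeff i| + |(X * p.derivative).coeff i|)
      (fun i _ => by positivity) (Finset.mem_range.mpr hj)
  have hMbound : ∀ N r, r ∈ (F N).roots → |r| ≤ max 1 ((n:ℝ) * S / |p.coeff n|) := by
    intro N r hr
    have h0 : (F N).eval r = 0 := (mem_roots (hF_ne N)).mp hr
    refine root_bound n hn (F N) (hF_deg_le N) S (hS_bound N) |p.coeff n|
      (abs_pos.mpr hpc) ?_ r h0
    rw [hF_coeff, abs_mul]
    have h4 : |1 + (n:ℝ)/((N:ℝ)+1)| = 1 + (n:ℝ)/((N:ℝ)+1) := abs_of_pos (hfactor_pos N)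
    rw [h4]
    nlinarith [abs_nonneg (p.coeff n), div_nonneg (Nat.cast_nonneg (α := ℝ) n) (by positivity : (0:ℝ) ≤ (N:ℝ)+1)]
  have hlim : Tendsto (fun N : ℕ => 1/((N:ℝ)+1)) atTop (nhds 0) :=
    tendsto_one_div_add_atTop_nhds_zero_nat
  have heval : ∀ x : ℝ, Tendsto (fun N => (F N).eval x) atTop (nhds (g.eval x)) := by
    intro x
    have h5 : (fun N => (F N).eval x)
        = fun N : ℕ => g.eval x + (1/((N:ℝ)+1)) * ((X * p.derivative).eval x) := by
      funext N; rw [hFdef]; simp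
    rw [h5]
    have := ((hlim.mul_const ((X * p.derivative).eval x)).const_add (g.eval x))
    simpa using this
  have hlead : Tendsto (fun N => (F N).coeff n) atTop (nhds (g.coeff n)) := by
    have h6 : (fun N => (F N).coeff n)
        = fun N : ℕ => p.coeff n + (p.coeff n * n) * (1/((N:ℝ)+1)) := by
      funext N; rw [hF_coeff]; field_simp
    rw [h6, hg_coeff]
    have := (hlim.const_mul (p.coeff n * n)).const_add (p.coeff n)
    simpa using this
  obtain ⟨s, hs, hfac⟩ := lim_roots n F g hF_deg hF_card _ hMbound heval hlead
  have h7 : g.roots = s := by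
    rw [hfac, roots_C_mul _ (by rw [hg_coeff]; exact hpc), roots_multiset_prod_X_sub_C]
  exact ⟨hg_deg, hg_coeff, by rw [h7, hs]⟩


section HPsec
variable (n : ℕ)

noncomputable def genpoly (b : ℕ → ℝ) : Polynomial ℝ :=
  ∑ k ∈ Finset.range (n+1), C (b k) * X^(n-k)

lemma genpoly_coeff (b : ℕ → ℝ) {j : ℕ} (hj : j ≤ n) :
    (genpoly n b).coeff j = b (n - j) := by
  rw [genpoly, finset_sum_coeff]
  rw [Finset.sum_eq_single (n - j)]
  · rw [coeff_C_mul, coeff_X_pow, if_pos (by omega), mul_one]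
  · intro k hk hne
    rw [coeff_C_mul, coeff_X_pow, if_neg (by simp at hk; omega), mul_zero]
  · intro h
    exact absurd (Finset.mem_range.mpr (by omega)) h

lemma genpoly_coeff_top (b : ℕ → ℝ) : (genpoly n b).coeff n = b 0 := by
  rw [genpoly_coeff n b (le_refl n), Nat.sub_self]

lemma genpoly_natDegree_le (b : ℕ → ℝ) : (genpoly n b).natDegree ≤ n := by
  apply natDegree_sum_le_of_forall_le
  intro k _
  apply le_trans (natDegree_C_mul_le _ _)
  rw [natDegree_X_pow]
  omega

lemma genpoly_eval (b : ℕ → ℝ) (x : ℝ) :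
    (genpoly n b).eval x = ∑ k ∈ Finset.range (n+1), b k * x^(n-k) := by
  rw [genpoly, eval_finset_sum]
  exact Finset.sum_congr rfl fun k _ => by simp

noncomputable def HP (q : ℝ) (m : ℕ) : Polynomial ℝ :=
  genpoly n (fun k => (-1)^k * (n.descFactorial k : ℝ) * Ee q m k)

lemma HP_coeff_top (q : ℝ) (m : ℕ) : (HP n q m).coeff n = 1 := by
  rw [HP, genpoly_coeff_top]
  simp [Ee_zero]

lemma HP_natDegree (q : ℝ) (m : ℕ) : (HP n q m).natDegree = n :=
  le_antisymm (genpoly_natDegree_le n _)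
    (le_natDegree_of_ne_zero (by rw [HP_coeff_top]; exact one_ne_zero))

lemma HP_zero (q : ℝ) : HP n q 0 = X^n := by
  rw [HP, genpoly]
  rw [Finset.sum_eq_single 0]
  · simp [Ee_zero]
  · intro k _ hk
    match k, hk with
    | k+1, _ => rw [Ee_zero_succ]; simp
  · intro h; simp at h

lemma HP_succ (q : ℝ) (m : ℕ) :
    HP n q (m+1) = HP n q m - C (q^(m+1)) * (HP n q m).derivative := by
  ext j
  rw [coeff_sub, coeff_C_mul, coeff_derivative]
  rcases lt_trichotomy j n with hj | hj | hj
  · have hj1 : j ≤ n := le_of_lt hj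
    have hj2 : j + 1 ≤ n := hj
    simp only [HP]
    rw [genpoly_coeff n _ hj1, genpoly_coeff n _ hj1, genpoly_coeff n _ hj2]
    have hk : n - j = (n - (j+1)) + 1 := by omega
    rw [hk, Ee_succ_succ, Nat.descFactorial_succ]
    have hnk : n - (n - (j+1)) = j + 1 := by omega
    rw [hnk]
    push_cast
    ring
  · subst hj
    simp only [HP]
    rw [genpoly_coeff j _ (le_refl j), genpoly_coeff j _ (le_refl j)]
    have h0 : (genpoly j fun k => (-1)^k * (j.descFactorial k : ℝ) * Ee q m k).coeff (j+1) = 0 :=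
      coeff_eq_zero_of_natDegree_lt (lt_of_le_of_lt (genpoly_natDegree_le _ _) (lt_add_one j))
    rw [h0, Nat.sub_self]
    simp [Ee_zero]
  · have h1 : (HP n q (m+1)).coeff j = 0 :=
      coeff_eq_zero_of_natDegree_lt (by rw [HP_natDegree]; omega)
    have h2 : (HP n q m).coeff j = 0 :=
      coeff_eq_zero_of_natDegree_lt (by rw [HP_natDegree]; omega)
    have h3 : (HP n q m).coeff (j+1) = 0 :=
      coeff_eq_zero_of_natDegree_lt (by rw [HP_natDegree]; omega)
    rw [h1, h2, h3]
    simp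

lemma HP_card (hn : 1 ≤ n) {q : ℝ} (hq0 : 0 < q) : ∀ m, ((HP n q m).roots).card = n := by
  intro m
  induction m with
  | zero =>
    rw [HP_zero, roots_pow, roots_X]
    simp
  | succ m ih =>
    rw [HP_succ]
    exact (laguerre n hn (HP n q m) (HP_natDegree n q m) ih (q^(m+1)) (pow_pos hq0 (m+1))).2.2

noncomputable def Hinf (q : ℝ) : Polynomial ℝ :=
  genpoly n (fun k => (-1)^k * (n.descFactorial k : ℝ) * Le q k)

lemma Le_zero' {q : ℝ} (hq0 : 0 < q) (hq1 : q < 1) : Le q 0 = 1 := by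
  have h1 : Tendsto (fun m => Ee q m 0) atTop (nhds (Le q 0)) := Ee_tendsto hq0 hq1 0
  have h2 : (fun m => Ee q m 0) = fun _ => (1:ℝ) := funext fun m => Ee_zero m
  rw [h2] at h1
  exact tendsto_nhds_unique h1 tendsto_const_nhds

lemma Hinf_coeff_top {q : ℝ} (hq0 : 0 < q) (hq1 : q < 1) : (Hinf n q).coeff n = 1 := by
  rw [Hinf, genpoly_coeff_top, Le_zero' hq0 hq1]
  simp

lemma HP_ne_zero (q : ℝ) (m : ℕ) : HP n q m ≠ 0 := fun h => by
  have := HP_coeff_top n q m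
  rw [h] at this
  simp at this

lemma Hinf_fact (hn : 1 ≤ n) {q : ℝ} (hq0 : 0 < q) (hq1 : q < 1) :
    ∃ s : Multiset ℝ, s.card = n ∧ Hinf n q = C 1 * (s.map fun r => X - C r).prod := by
  set S : ℝ := ∑ k ∈ Finset.range (n+1), (n.descFactorial k : ℝ) * (q/(1-q))^k with hSdef
  have hqq : (0:ℝ) ≤ q/(1-q) := div_nonneg hq0.le (by linarith)
  have hS : ∀ N, ∀ j, j < n → |(HP n q N).coeff j| ≤ S := by
    intro N j hj
    rw [HP, genpoly_coeff n _ (le_of_lt hj)]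
    have h1 : |(-1:ℝ)^(n-j) * ((n.descFactorial (n-j) : ℝ)) * Ee q N (n-j)|
        ≤ (n.descFactorial (n-j) : ℝ) * (q/(1-q))^(n-j) := by
      rw [abs_mul, abs_mul, abs_pow, abs_neg, abs_one, one_pow, one_mul,
        Nat.abs_cast, abs_of_nonneg (Ee_nonneg hq0 N (n-j))]
      exact mul_le_mul_of_nonneg_left (Ee_le hq0 hq1 (n-j) N) (Nat.cast_nonneg _)
    refine le_trans h1 ?_
    exact Finset.single_le_sum (f := fun k => (n.descFactorial k : ℝ) * (q/(1-q))^k)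
      (fun i _ => by positivity) (Finset.mem_range.mpr (by omega))
  have hM : ∀ N r, r ∈ (HP n q N).roots → |r| ≤ max 1 ((n:ℝ) * S / 1) := by
    intro N r hr
    refine root_bound n hn _ (le_of_eq (HP_natDegree n q N)) S (hS N) 1 one_pos
      (by rw [HP_coeff_top]; norm_num) r ((mem_roots (HP_ne_zero n q N)).mp hr)
  have heval : ∀ x : ℝ, Tendsto (fun N => (HP n q N).eval x) atTop (nhds ((Hinf n q).eval x)) := by
    intro x
    have h2 : ∀ N, (HP n q N).eval x
        = ∑ k ∈ Finset.range (n+1), ((-1)^k * (n.descFactorial k : ℝ) * Ee q N k) * x^(n-k) :=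
      fun N => genpoly_eval n _ x
    have h3 : (Hinf n q).eval x
        = ∑ k ∈ Finset.range (n+1), ((-1)^k * (n.descFactorial k : ℝ) * Le q k) * x^(n-k) :=
      genpoly_eval n _ x
    simp only [h2, h3]
    apply tendsto_finset_sum
    intro k _
    exact ((Ee_tendsto hq0 hq1 k).const_mul ((-1)^k * (n.descFactorial k : ℝ))).mul_const _
  have hlead : Tendsto (fun N => (HP n q N).coeff n) atTop (nhds ((Hinf n q).coeff n)) := by
    simp only [HP_coeff_top, Hinf_coeff_top n hq0 hq1]
    exact tendsto_const_nhds
  obtain ⟨s, hs, hfac⟩ := lim_roots n (HP n q) (Hinf n q) (HP_natDegree n q)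
    (fun m => HP_card n hn hq0 m) _ hM heval hlead
  rw [Hinf_coeff_top n hq0 hq1] at hfac
  exact ⟨s, hs, hfac⟩

end HPsec

theorem stmt_6 (q : ℝ) (hq0 : 0 < q) (hq1 : q < 1) (n : ℕ) (hn : 1 ≤ n) :
    ∀ z : ℂ,
      (C 1 + ∑ k ∈ Finset.Icc 1 n,
          C (((n.factorial / (n - k).factorial : ℕ) : ℂ) *
            (q : ℂ) ^ (k * (k + 1) / 2) / ∏ i ∈ Finset.Icc 1 k, ((q : ℂ) ^ i - 1)) *
          X ^ k : Polynomial ℂ).IsRoot z →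
      ∃ r : ℝ, 0 < r ∧ z = (r : ℂ) := by
  intro z hz
  set cR : ℕ → ℝ := fun k => ((n.factorial / (n - k).factorial : ℕ) : ℝ)
      * q ^ (k * (k + 1) / 2) / ∏ i ∈ Finset.Icc 1 k, (q ^ i - 1) with hcRdef
  -- basic product facts
  have hprodpos : ∀ k : ℕ, 0 < ∏ i ∈ Finset.Icc 1 k, (1 - q^i) := by
    intro k
    apply Finset.prod_pos
    intro i hi
    have hi1 : 1 ≤ i := (Finset.mem_Icc.mp hi).1
    have : q^i < 1 := pow_lt_one₀ hq0.le hq1 (by omega)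
    linarith
  have hprodneg : ∀ k : ℕ, (∏ i ∈ Finset.Icc 1 k, (q^i - 1))
      = (-1)^k * ∏ i ∈ Finset.Icc 1 k, (1 - q^i) := by
    intro k
    have h1 : ∀ i ∈ Finset.Icc 1 k, q^i - 1 = (-1) * (1 - q^i) := fun i _ => by ring
    rw [Finset.prod_congr rfl h1, Finset.prod_mul_distrib, Finset.prod_const,
      Nat.card_Icc]
    simp
  have hcR0 : cR 0 = 1 := by
    rw [hcRdef]
    simp [Nat.div_self n.factorial_pos]
  -- cR equals the coefficients of Hinf
  have hcc : ∀ k, k ≤ n → cR k = (-1)^k * (n.descFactorial k : ℝ) * Le q k := by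
    intro k hk
    have hD : (n.factorial / (n - k).factorial : ℕ) = n.descFactorial k :=
      (Nat.descFactorial_eq_div hk).symm
    have hP := hprodpos k
    have hLe := Le_closed hq0 hq1 k
    rw [hcRdef]
    simp only [hD, hprodneg k]
    have hne : ((-1:ℝ))^k * ∏ i ∈ Finset.Icc 1 k, (1 - q^i) ≠ 0 := by
      apply mul_ne_zero _ (ne_of_gt hP)
      intro h
      have := pow_eq_zero_iff (n := k) (M₀ := ℝ) (a := -1)
      simp at h
    rw [div_eq_iff hne]
    have hsq : ((-1:ℝ))^k * ((-1:ℝ))^k = 1 := by rw [← mul_pow]; norm_num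
    have hre : ((-1:ℝ))^k * ((n.descFactorial k:ℝ)) * Le q k
          * (((-1:ℝ))^k * ∏ i ∈ Finset.Icc 1 k, (1 - q^i))
        = ((((-1:ℝ))^k * ((-1:ℝ))^k))
          * ((n.descFactorial k:ℝ) * (Le q k * ∏ i ∈ Finset.Icc 1 k, (1 - q^i))) := by
      ring
    rw [hre, hsq, one_mul, hLe]
  -- the real polynomial
  set Preal : Polynomial ℝ := ∑ k ∈ Finset.range (n+1), C (cR k) * X^k with hPrealdef
  have hsplit : Finset.range (n+1) = insert 0 (Finset.Icc 1 n) := by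
    ext x; simp; omega
  have hmap : (C 1 + ∑ k ∈ Finset.Icc 1 n,
      C (((n.factorial / (n - k).factorial : ℕ) : ℂ) *
        (q : ℂ) ^ (k * (k + 1) / 2) / ∏ i ∈ Finset.Icc 1 k, ((q : ℂ) ^ i - 1)) *
      X ^ k : Polynomial ℂ) = Preal.map (algebraMap ℝ ℂ) := by
    rw [hPrealdef, Polynomial.map_sum]
    rw [hsplit, Finset.sum_insert (by simp)]
    congr 1
    · rw [Polynomial.map_mul, Polynomial.map_pow, map_C, map_X, pow_zero, mul_one, hcR0]
      norm_num
    · apply Finset.sum_congr rfl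
      intro k _
      rw [Polynomial.map_mul, Polynomial.map_pow, map_C, map_X]
      congr 1
      rw [hcRdef, Complex.coe_algebraMap]
      push_cast
      ring_nf
  have hz' : (Preal.map (algebraMap ℝ ℂ)).eval z = 0 := by
    rw [← hmap]; exact hz
  have hev : ∀ w : ℂ, (Preal.map (algebraMap ℝ ℂ)).eval w
      = ∑ k ∈ Finset.range (n+1), (cR k : ℂ) * w^k := by
    intro w
    rw [hPrealdef, Polynomial.map_sum, eval_finset_sum]
    apply Finset.sum_congr rfl
    intro k _
    rw [Polynomial.map_mul, Polynomial.map_pow, map_C, map_X]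
    simp [Complex.coe_algebraMap]
  have hz0 : z ≠ 0 := by
    intro h0
    rw [hev z, h0] at hz'
    rw [Finset.sum_eq_single 0] at hz'
    · simp [hcR0] at hz'
    · intro k hk hkne
      rw [zero_pow hkne, mul_zero]
    · intro h; simp at h
  -- the factorization of Hinf
  obtain ⟨s, hsc, hfac⟩ := Hinf_fact n hn hq0 hq1
  have hinf_eval : ∀ w : ℂ, ((Hinf n q).map (algebraMap ℝ ℂ)).eval w
      = (s.map (fun r : ℝ => w - (r:ℂ))).prod := by
    intro w
    rw [hfac, Polynomial.map_mul, map_C, Polynomial.map_multiset_prod, Multiset.map_map]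
    rw [eval_mul, eval_C, eval_multiset_prod, Multiset.map_map]
    have h1 : ((algebraMap ℝ ℂ) 1) = 1 := by norm_num
    rw [h1, one_mul]
    congr 1
    apply Multiset.map_congr rfl
    intro r _
    simp [Complex.coe_algebraMap]
  have hinf_eval2 : ∀ w : ℂ, ((Hinf n q).map (algebraMap ℝ ℂ)).eval w
      = ∑ k ∈ Finset.range (n+1), (cR k : ℂ) * w^(n-k) := by
    intro w
    rw [Hinf, genpoly, Polynomial.map_sum, eval_finset_sum]
    apply Finset.sum_congr rfl
    intro k hk
    rw [Polynomial.map_mul, Polynomial.map_pow, map_C, map_X]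
    rw [hcc k (by simp at hk; omega)]
    simp [Complex.coe_algebraMap]
  -- the reversal identity
  have hkey : (0:ℂ) = z^n * (((Hinf n q).map (algebraMap ℝ ℂ)).eval z⁻¹) := by
    rw [hinf_eval2, Finset.mul_sum, ← hz', hev]
    apply Finset.sum_congr rfl
    intro k hk
    have hkn : k ≤ n := by simp at hk; omega
    have h2 : z^n = z^k * z^(n-k) := by rw [← pow_add]; congr 1; omega
    rw [inv_pow, h2]
    have h7 : z^k * z^(n-k) * (((cR k : ℝ):ℂ) * (z^(n-k))⁻¹)
        = ((cR k : ℝ):ℂ) * z^k * (z^(n-k) * (z^(n-k))⁻¹) := by ring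
    rw [h7, mul_inv_cancel₀ (pow_ne_zero _ hz0), mul_one]
  have hroot : (((Hinf n q).map (algebraMap ℝ ℂ)).eval z⁻¹) = 0 := by
    have := hkey.symm
    rcases mul_eq_zero.mp this with h | h
    · exact absurd h (pow_ne_zero _ hz0)
    · exact h
  rw [hinf_eval z⁻¹] at hroot
  rw [Multiset.prod_eq_zero_iff] at hroot
  obtain ⟨r, hrs, hr0⟩ := Multiset.mem_map.mp hroot
  have hzr : z⁻¹ = (r : ℂ) := by linear_combination hr0
  have hrne : (r:ℂ) ≠ 0 := by rw [← hzr]; exact inv_ne_zero hz0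
  have hzval : z = ((r⁻¹ : ℝ) : ℂ) := by
    rw [Complex.ofReal_inv, ← hzr, inv_inv]
  -- positivity
  set ρ : ℝ := r⁻¹ with hρdef
  have hreval : Preal.eval ρ = 0 := by
    have h3 : (Preal.map (algebraMap ℝ ℂ)).eval ((ρ:ℝ):ℂ) = ((Preal.eval ρ : ℝ) : ℂ) := by
      rw [eval_map, ← Complex.coe_algebraMap, eval₂_at_apply]
    rw [← hzval] at h3
    rw [hz'] at h3
    exact_mod_cast h3.symm
  have hρpos : 0 < ρ := by
    rcases lt_or_ge 0 ρ with h | h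
    · exact h
    · exfalso
      have hterm : ∀ k ∈ Finset.range (n+1), (0:ℝ) ≤ cR k * ρ^k := by
        intro k hk
        rw [hcc k (by simp at hk; omega)]
        have h4 : (-1:ℝ)^k * (n.descFactorial k : ℝ) * Le q k * ρ^k
            = (n.descFactorial k : ℝ) * Le q k * (-ρ)^k := by
          rw [neg_pow]; ring
        rw [h4]
        have hLn := Le_nonneg hq0 hq1 k
        have h6 : (0:ℝ) ≤ (-ρ)^k := pow_nonneg (by linarith) k
        exact mul_nonneg (mul_nonneg (Nat.cast_nonneg _) hLn) h6
      have hsum : (1:ℝ) ≤ ∑ k ∈ Finset.range (n+1), cR k * ρ^k := by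
        have h5 : cR 0 * ρ^0 = 1 := by rw [hcR0, pow_zero, mul_one]
        calc (1:ℝ) = cR 0 * ρ^0 := h5.symm
          _ ≤ ∑ k ∈ Finset.range (n+1), cR k * ρ^k :=
            Finset.single_le_sum hterm (by simp)
      have h6 : Preal.eval ρ = ∑ k ∈ Finset.range (n+1), cR k * ρ^k := by
        rw [hPrealdef, eval_finset_sum]
        exact Finset.sum_congr rfl fun k _ => by simp
      rw [h6] at hreval
      linarith
  exact ⟨ρ, hρpos, hzval⟩
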